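/- arXiv:1509.04736 — 2 statements merged into one kernel-verified Lean document; each statement's English description precedes it below -/
import Mathlib

section
/- The automorphisms σ_{λ,μ,γ,i} of the quantum spatial ageing algebra A satisfy the composition rule σ_{λ,μ,γ,i} ∘ σ_{λ',μ',γ',j} = σ_{λλ'γ^j, μμ'γ^{-j}, γγ', i+j}, and σ_{λ,μ,γ,i}^{-1} = σ_{λ^{-1}γ^i, μ^{-1}γ^{-i}, γ^{-1}, -i}. -/
/-- Generators of the quantum spatial ageing algebra. -/
inductive QGen : Type
  | E | K | Kinv | X | Y

open FreeAlgebra in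
/-- Defining relations of the quantum spatial ageing algebra
`EK = q⁻²KE`, `XK = q⁻¹KX`, `YK = qKY`, `EX = qXE`, `EY = X + q⁻¹YE`, `qYX = XY`,
together with `K K⁻¹ = K⁻¹ K = 1`. -/
inductive QSARel (k : Type) [Field k] (q : k) :
    FreeAlgebra k QGen → FreeAlgebra k QGen → Prop
  | KKinv : QSARel k q (ι k QGen.K * ι k QGen.Kinv) 1
  | KinvK : QSARel k q (ι k QGen.Kinv * ι k QGen.K) 1
  | EK : QSARel k q (ι k QGen.E * ι k QGen.K) ((q ^ 2)⁻¹ • (ι k QGen.K * ι k QGen.E))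
  | XK : QSARel k q (ι k QGen.X * ι k QGen.K) (q⁻¹ • (ι k QGen.K * ι k QGen.X))
  | YK : QSARel k q (ι k QGen.Y * ι k QGen.K) (q • (ι k QGen.K * ι k QGen.Y))
  | EX : QSARel k q (ι k QGen.E * ι k QGen.X) (q • (ι k QGen.X * ι k QGen.E))
  | EY : QSARel k q (ι k QGen.E * ι k QGen.Y)
      (ι k QGen.X + q⁻¹ • (ι k QGen.Y * ι k QGen.E))
  | YX : QSARel k q (q • (ι k QGen.Y * ι k QGen.X)) (ι k QGen.X * ι k QGen.Y)

/-- The quantum spatial ageing algebra `𝒜 = 𝕂_q[X,Y] ⋊ U_q^{≥0}(sl₂)`. -/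
noncomputable abbrev QSA (k : Type) [Field k] (q : k) : Type := RingQuot (QSARel k q)

noncomputable def Egen (k : Type) [Field k] (q : k) : QSA k q :=
  RingQuot.mkAlgHom k (QSARel k q) (FreeAlgebra.ι k QGen.E)
noncomputable def Kgen (k : Type) [Field k] (q : k) : QSA k q :=
  RingQuot.mkAlgHom k (QSARel k q) (FreeAlgebra.ι k QGen.K)
noncomputable def Kinvgen (k : Type) [Field k] (q : k) : QSA k q :=
  RingQuot.mkAlgHom k (QSARel k q) (FreeAlgebra.ι k QGen.Kinv)
noncomputable def Xgen (k : Type) [Field k] (q : k) : QSA k q :=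
  RingQuot.mkAlgHom k (QSARel k q) (FreeAlgebra.ι k QGen.X)
noncomputable def Ygen (k : Type) [Field k] (q : k) : QSA k q :=
  RingQuot.mkAlgHom k (QSARel k q) (FreeAlgebra.ι k QGen.Y)

/-- The normal element `φ = EY - qYE`. -/
noncomputable def phi (k : Type) [Field k] (q : k) : QSA k q :=
  Egen k q * Ygen k q - q • (Ygen k q * Egen k q)

/-- `K` as a unit of `𝒜` (with inverse `K⁻¹`). -/
noncomputable def Kunit (k : Type) [Field k] (q : k) : (QSA k q)ˣ where
  val := Kgen k q
  inv := Kinvgen k q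
  val_inv := by
    rw [Kgen, Kinvgen, ← map_mul, RingQuot.mkAlgHom_rel k QSARel.KKinv, map_one]
  inv_val := by
    rw [Kinvgen, Kgen, ← map_mul, RingQuot.mkAlgHom_rel k QSARel.KinvK, map_one]

/-- `σ` is the automorphism `σ_{λ,μ,γ,i}` of `𝒜`, i.e. it is given on the generators by
`X ↦ λKⁱX`, `Y ↦ μK⁻ⁱY`, `K ↦ γK`, `E ↦ λμ⁻¹q⁻²ⁱK²ⁱE`. -/
noncomputable def IsSigma (k : Type) [Field k] (q lam mu gam : k) (i : ℤ)
    (σ : QSA k q ≃ₐ[k] QSA k q) : Prop :=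
  σ (Xgen k q) = lam • (((Kunit k q ^ i : (QSA k q)ˣ) : QSA k q) * Xgen k q) ∧
  σ (Ygen k q) = mu • (((Kunit k q ^ (-i) : (QSA k q)ˣ) : QSA k q) * Ygen k q) ∧
  σ (Kgen k q) = gam • Kgen k q ∧
  σ (Egen k q) =
    (lam * mu⁻¹ * q ^ (-2 * i)) •
      (((Kunit k q ^ (2 * i) : (QSA k q)ˣ) : QSA k q) * Egen k q)

section Aux

variable {k : Type} [Field k] {q : k}

lemma KKinv' : Kgen k q * Kinvgen k q = 1 := (Kunit k q).val_inv
lemma KinvK' : Kinvgen k q * Kgen k q = 1 := (Kunit k q).inv_val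

/-- abbreviation for the coe of integer powers of `Kunit` -/
noncomputable abbrev Kz (k : Type) [Field k] (q : k) (n : ℤ) : QSA k q :=
  ((Kunit k q ^ n : (QSA k q)ˣ) : QSA k q)

lemma Kz_add (a b : ℤ) :
    ((Kunit k q ^ (a + b) : (QSA k q)ˣ) : QSA k q)
      = ((Kunit k q ^ a : (QSA k q)ˣ) : QSA k q) * ((Kunit k q ^ b : (QSA k q)ˣ) : QSA k q) := by
  rw [show Kunit k q ^ (a + b) = Kunit k q ^ a * Kunit k q ^ b from zpow_add _ a b,
    Units.val_mul]

lemma sigma_Kinv {gam : k} (hg : gam ≠ 0) (σ : QSA k q ≃ₐ[k] QSA k q)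
    (hK : σ (Kgen k q) = gam • Kgen k q) :
    σ (Kinvgen k q) = gam⁻¹ • Kinvgen k q := by
  have h1 : σ (Kinvgen k q) * (gam • Kgen k q) = 1 := by
    rw [← hK, ← map_mul, KinvK', map_one]
  have h2 : σ (Kinvgen k q) * Kgen k q = gam⁻¹ • (1 : QSA k q) := by
    rw [mul_smul_comm] at h1
    calc σ (Kinvgen k q) * Kgen k q
        = gam⁻¹ • (gam • (σ (Kinvgen k q) * Kgen k q)) := by
          rw [smul_smul, inv_mul_cancel₀ hg, one_smul]
      _ = gam⁻¹ • (1 : QSA k q) := by rw [h1]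
  calc σ (Kinvgen k q) = σ (Kinvgen k q) * (Kgen k q * Kinvgen k q) := by
        rw [KKinv', mul_one]
    _ = (σ (Kinvgen k q) * Kgen k q) * Kinvgen k q := by rw [mul_assoc]
    _ = gam⁻¹ • Kinvgen k q := by rw [h2, smul_mul_assoc, one_mul]

lemma sigma_Kz {gam : k} (hg : gam ≠ 0) (σ : QSA k q ≃ₐ[k] QSA k q)
    (hK : σ (Kgen k q) = gam • Kgen k q) (n : ℤ) :
    σ (Kz k q n) = gam ^ n • Kz k q n := by
  have hKi := sigma_Kinv hg σ hK
  have hv : ((Kunit k q : (QSA k q)ˣ) : QSA k q) = Kgen k q := rfl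
  have hvi : (((Kunit k q)⁻¹ : (QSA k q)ˣ) : QSA k q) = Kinvgen k q := rfl
  cases n with
  | ofNat m =>
      have h1 : Kz k q (Int.ofNat m) = Kgen k q ^ m := by
        show ((Kunit k q ^ (Int.ofNat m) : (QSA k q)ˣ) : QSA k q) = _
        rw [Int.ofNat_eq_coe, zpow_natCast, Units.val_pow_eq_pow_val, hv]
      rw [h1, map_pow, hK, smul_pow, Int.ofNat_eq_coe, zpow_natCast]
  | negSucc m =>
      have h1 : Kz k q (Int.negSucc m) = Kinvgen k q ^ (m + 1) := by
        show ((Kunit k q ^ (Int.negSucc m) : (QSA k q)ˣ) : QSA k q) = _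
        rw [zpow_negSucc, ← inv_pow, Units.val_pow_eq_pow_val, hvi]
      rw [h1, map_pow, hKi, smul_pow, zpow_negSucc, ← inv_pow]

lemma isSigma_unique {lam mu gam : k} {i : ℤ} (hg : gam ≠ 0)
    {σ σ' : QSA k q ≃ₐ[k] QSA k q}
    (h : IsSigma k q lam mu gam i σ) (h' : IsSigma k q lam mu gam i σ') :
    ∀ a, σ a = σ' a := by
  obtain ⟨hX, hY, hK, hE⟩ := h
  obtain ⟨hX', hY', hK', hE'⟩ := h'
  suffices hh : (σ : QSA k q →ₐ[k] QSA k q) = (σ' : QSA k q →ₐ[k] QSA k q) by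
    intro a
    exact AlgHom.congr_fun hh a
  apply RingQuot.ringQuot_ext'
  apply FreeAlgebra.hom_ext
  funext g
  cases g with
  | E => simpa [Egen] using hE.trans hE'.symm
  | K => simpa [Kgen] using hK.trans hK'.symm
  | Kinv =>
      have := (sigma_Kinv hg σ hK).trans (sigma_Kinv hg σ' hK').symm
      simpa [Kinvgen] using this
  | X => simpa [Xgen] using hX.trans hX'.symm
  | Y => simpa [Ygen] using hY.trans hY'.symm

lemma isSigma_comp {lam mu gam lam' mu' gam' : k} {i j : ℤ}
    (hg : gam ≠ 0) {σ σ' : QSA k q ≃ₐ[k] QSA k q}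
    (h : IsSigma k q lam mu gam i σ) (h' : IsSigma k q lam' mu' gam' j σ')
    (hq : q ≠ 0) (hmu : mu ≠ 0) (hmu' : mu' ≠ 0) :
    IsSigma k q (lam * lam' * gam ^ j) (mu * mu' * gam ^ (-j)) (gam * gam') (i + j)
      (σ'.trans σ) := by
  obtain ⟨hX, hY, hK, hE⟩ := h
  obtain ⟨hX', hY', hK', hE'⟩ := h'
  have hKz : ∀ n : ℤ, σ ((Kunit k q ^ n : (QSA k q)ˣ) : QSA k q)
      = gam ^ n • ((Kunit k q ^ n : (QSA k q)ˣ) : QSA k q) := sigma_Kz hg σ hK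
  refine ⟨?_, ?_, ?_, ?_⟩
  · show σ (σ' (Xgen k q)) = _
    rw [hX', map_smul, map_mul, hKz j, hX,
      show i + j = j + i from add_comm i j, Kz_add]
    simp only [smul_mul_assoc, mul_smul_comm, smul_smul, mul_assoc]
    ring_nf
  · show σ (σ' (Ygen k q)) = _
    rw [hY', map_smul, map_mul, hKz (-j), hY,
      show -(i + j) = -j + -i by ring, Kz_add]
    simp only [smul_mul_assoc, mul_smul_comm, smul_smul, mul_assoc]
    ring_nf
  · show σ (σ' (Kgen k q)) = _
    rw [hK', map_smul, hK, smul_smul, mul_comm]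
  · show σ (σ' (Egen k q)) = _
    rw [hE', map_smul, map_mul, hKz (2 * j), hE,
      show 2 * (i + j) = 2 * j + 2 * i by ring, Kz_add]
    simp only [smul_mul_assoc, mul_smul_comm, smul_smul, mul_assoc]
    congr 1
    rw [mul_inv, mul_inv, show -2 * (i + j) = -2 * i + -2 * j by ring,
      zpow_add₀ hq, zpow_neg, inv_inv, show (2 : ℤ) * j = j + j by ring,
      zpow_add₀ hg]
    field_simp

lemma isSigma_refl : IsSigma k q 1 1 1 0 (AlgEquiv.refl) := by
  refine ⟨?_, ?_, ?_, ?_⟩ <;> simp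

end Aux

/-- the automorphisms `σ_{λ,μ,γ,i}` satisfy
`σ_{λ,μ,γ,i} ∘ σ_{λ',μ',γ',j} = σ_{λλ'γʲ, μμ'γ⁻ʲ, γγ', i+j}` and
`σ_{λ,μ,γ,i}⁻¹ = σ_{λ⁻¹γⁱ, μ⁻¹γ⁻ⁱ, γ⁻¹, −i}`. -/
theorem stmt16 (k : Type) [Field k] (q : k) (hq : q ≠ 0)
    (hq' : ∀ n : ℕ, n ≠ 0 → q ^ n ≠ 1)
    (lam mu gam lam' mu' gam' : k)
    (hlam : lam ≠ 0) (hmu : mu ≠ 0) (hgam : gam ≠ 0)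
    (hlam' : lam' ≠ 0) (hmu' : mu' ≠ 0) (hgam' : gam' ≠ 0) (i j : ℤ)
    (σ₁ σ₂ σ₃ σ₄ : QSA k q ≃ₐ[k] QSA k q)
    (h₁ : IsSigma k q lam mu gam i σ₁)
    (h₂ : IsSigma k q lam' mu' gam' j σ₂)
    (h₃ : IsSigma k q (lam * lam' * gam ^ j) (mu * mu' * gam ^ (-j)) (gam * gam') (i + j) σ₃)
    (h₄ : IsSigma k q (lam⁻¹ * gam ^ i) (mu⁻¹ * gam ^ (-i)) gam⁻¹ (-i) σ₄) :
    (∀ a : QSA k q, σ₁ (σ₂ a) = σ₃ a) ∧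
    (∀ a : QSA k q, σ₁ (σ₄ a) = a) ∧
    (∀ a : QSA k q, σ₄ (σ₁ a) = a) := by
  have hgi : gam ^ i ≠ 0 := zpow_ne_zero _ hgam
  have hgni : gam ^ (-i) ≠ 0 := zpow_ne_zero _ hgam
  refine ⟨?_, ?_, ?_⟩
  · intro a
    have hc := isSigma_comp hgam h₁ h₂ hq hmu hmu'
    have hgg : gam * gam' ≠ 0 := mul_ne_zero hgam hgam'
    exact isSigma_unique hgg hc h₃ a
  · intro a
    have hc := isSigma_comp hgam h₁ h₄ hq hmu (mul_ne_zero (inv_ne_zero hmu) hgni)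
    rw [show lam * (lam⁻¹ * gam ^ i) * gam ^ (-i) = 1 by
          simp only [zpow_neg, inv_zpow, inv_inv]; field_simp,
        show mu * (mu⁻¹ * gam ^ (-i)) * gam ^ (- -i) = 1 by
          simp only [neg_neg, zpow_neg, inv_zpow, inv_inv]; field_simp,
        show gam * gam⁻¹ = 1 from mul_inv_cancel₀ hgam,
        show i + -i = 0 by ring] at hc
    exact isSigma_unique one_ne_zero hc isSigma_refl a
  · intro a
    have hc := isSigma_comp (inv_ne_zero hgam) h₄ h₁ hq
      (mul_ne_zero (inv_ne_zero hmu) hgni) hmu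
    rw [show lam⁻¹ * gam ^ i * lam * (gam⁻¹) ^ i = 1 by
          simp only [zpow_neg, inv_zpow, inv_inv]; field_simp,
        show mu⁻¹ * gam ^ (-i) * mu * (gam⁻¹) ^ (-i) = 1 by
          simp only [neg_neg, zpow_neg, inv_zpow, inv_inv]; field_simp,
        show gam⁻¹ * gam = 1 from inv_mul_cancel₀ hgam,
        show -i + i = 0 by ring] at hc
    exact isSigma_unique one_ne_zero hc isSigma_refl a
end

section
/- In the quantum spatial ageing algebra A, the elements t := YX and u := Yφ (with φ = EY − qYE) commute with K and satisfy tu = q^2·ut. -/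
section QSAAux

variable {k : Type} [Field k] {q : k}

private lemma rXK : Xgen k q * Kgen k q = q⁻¹ • (Kgen k q * Xgen k q) := by
  have := RingQuot.mkAlgHom_rel k (QSARel.XK (k := k) (q := q))
  simpa [Xgen, Kgen, map_mul] using this

private lemma rYK : Ygen k q * Kgen k q = q • (Kgen k q * Ygen k q) := by
  have := RingQuot.mkAlgHom_rel k (QSARel.YK (k := k) (q := q))
  simpa [Ygen, Kgen, map_mul] using this

private lemma rEK : Egen k q * Kgen k q = (q ^ 2)⁻¹ • (Kgen k q * Egen k q) := by
  have := RingQuot.mkAlgHom_rel k (QSARel.EK (k := k) (q := q))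
  simpa [Egen, Kgen, map_mul] using this

private lemma rEX : Egen k q * Xgen k q = q • (Xgen k q * Egen k q) := by
  have := RingQuot.mkAlgHom_rel k (QSARel.EX (k := k) (q := q))
  simpa [Egen, Xgen, map_mul] using this

private lemma rEY : Egen k q * Ygen k q = Xgen k q + q⁻¹ • (Ygen k q * Egen k q) := by
  have := RingQuot.mkAlgHom_rel k (QSARel.EY (k := k) (q := q))
  simpa [Egen, Xgen, Ygen, map_mul] using this

private lemma rXY : Xgen k q * Ygen k q = q • (Ygen k q * Xgen k q) := by
  have := RingQuot.mkAlgHom_rel k (QSARel.YX (k := k) (q := q))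
  simpa [Xgen, Ygen, map_mul] using this.symm

private lemma rXK' (a : QSA k q) :
    Xgen k q * (Kgen k q * a) = q⁻¹ • (Kgen k q * (Xgen k q * a)) := by
  rw [← mul_assoc, rXK, smul_mul_assoc, mul_assoc]

private lemma rYK' (a : QSA k q) :
    Ygen k q * (Kgen k q * a) = q • (Kgen k q * (Ygen k q * a)) := by
  rw [← mul_assoc, rYK, smul_mul_assoc, mul_assoc]

private lemma rEK' (a : QSA k q) :
    Egen k q * (Kgen k q * a) = (q ^ 2)⁻¹ • (Kgen k q * (Egen k q * a)) := by
  rw [← mul_assoc, rEK, smul_mul_assoc, mul_assoc]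

private lemma rEX' (a : QSA k q) :
    Egen k q * (Xgen k q * a) = q • (Xgen k q * (Egen k q * a)) := by
  rw [← mul_assoc, rEX, smul_mul_assoc, mul_assoc]

private lemma rEY' (a : QSA k q) :
    Egen k q * (Ygen k q * a) = Xgen k q * a + q⁻¹ • (Ygen k q * (Egen k q * a)) := by
  rw [← mul_assoc, rEY, add_mul, smul_mul_assoc, mul_assoc]

private lemma rXY' (a : QSA k q) :
    Xgen k q * (Ygen k q * a) = q • (Ygen k q * (Xgen k q * a)) := by
  rw [← mul_assoc, rXY, smul_mul_assoc, mul_assoc]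

end QSAAux

/-- `t = YX` and `u = Yφ` commute with `K` and `tu = q²ut`. -/
theorem stmt17 (k : Type) [Field k] (q : k) (hq : q ≠ 0)
    (hq' : ∀ n : ℕ, n ≠ 0 → q ^ n ≠ 1) :
    (Ygen k q * Xgen k q) * Kgen k q = Kgen k q * (Ygen k q * Xgen k q) ∧
    (Ygen k q * phi k q) * Kgen k q = Kgen k q * (Ygen k q * phi k q) ∧
    (Ygen k q * Xgen k q) * (Ygen k q * phi k q) =
      q ^ 2 • ((Ygen k q * phi k q) * (Ygen k q * Xgen k q)) := by
  refine ⟨?_, ?_, ?_⟩ <;>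
  · simp only [phi, mul_sub, sub_mul, mul_add, add_mul, smul_mul_assoc, mul_smul_comm,
      smul_sub, smul_add, smul_smul, mul_assoc,
      rXK, rYK, rEK, rEX, rEY, rXY, rXK', rYK', rEK', rEX', rEY', rXY']
    match_scalars <;> field_simp <;> ring
end
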